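/- Sufficiency of full product-structured sets for multicausal polarity: Suppose for every i ∈ {1,...,N} there are P^i-full Borel sets A^{i,1} ⊆ Ω^i_1 and, for every t ∈ {2,...,T} and history ω^{1:N}_{1:t−1}, K^i_t(ω^i_{1:t−1};·)-full sets A^{t,i}_{ω^{1:N}_{1:t−1}} ⊆ Ω^i_t, such that the glued set E' := [⊠_{t=1}^T (A^{t,1}_• × ... × A^{t,N}_•)]^C is Borel. Then π(E') = 0 for every multicausal coupling π of P^1,...,P^N; hence any Borel set E ⊆ E' is polar for the multicausal transport problem. -/

import Mathlib

open MeasureTheory ProbabilityTheory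

noncomputable section

abbrev OTPath (T : ℕ) := Fin T → ℝ

def ev {T : ℕ} (x : OTPath T) (n : ℕ) : ℝ := if h : n < T then x ⟨n, h⟩ else 0

def trunc {T : ℕ} (x : OTPath T) (t : ℕ) : OTPath T :=
  fun s => if (s : ℕ) < t then x s else 0

def set1 {T : ℕ} (x : OTPath T) (t : ℕ) (v : ℝ) : OTPath T :=
  fun s => if (s : ℕ) = t then v else x s

def filt (T t : ℕ) : MeasurableSpace (OTPath T) :=
  ⨆ s : {s : Fin T // (s : ℕ) < t},
    MeasurableSpace.comap (fun x : OTPath T => x s.1) inferInstance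

def filtI (N T : ℕ) (i : Fin N) (t : ℕ) : MeasurableSpace (Fin N → OTPath T) :=
  ⨆ s : {s : Fin T // (s : ℕ) < t},
    MeasurableSpace.comap (fun ω : Fin N → OTPath T => ω i s.1) inferInstance

lemma filtI_le (N T : ℕ) (i : Fin N) (t : ℕ) :
    filtI N T i t ≤ (inferInstance : MeasurableSpace (Fin N → OTPath T)) :=
  iSup_le fun s => Measurable.comap_le
    ((measurable_pi_apply s.1).comp (measurable_pi_apply i) :
      Measurable fun ω : Fin N → OTPath T => ω i s.1)

def filtOthers (N T : ℕ) (i : Fin N) (t : ℕ) : MeasurableSpace (Fin N → OTPath T) :=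
  ⨆ j : {j : Fin N // j ≠ i}, filtI N T j.1 t

/-- Multicausality of a probability measure on the product of the `N` path spaces. -/
def Multicausal (N T : ℕ) (π : Measure (Fin N → OTPath T)) [IsFiniteMeasure π] : Prop :=
  ∀ i : Fin N, ∀ t : ℕ, 1 ≤ t → t ≤ T →
    CondIndep (filtI N T i t) (filtI N T i T) (filtOthers N T i t) (filtI_le N T i t) π

-- update coordinate j of ω at time t to value v
def upd {N T : ℕ} (ω : Fin N → OTPath T) (j : Fin N) (t : ℕ) (v : ℝ) : Fin N → OTPath T :=
  Function.update ω j (set1 (ω j) t v)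

lemma upd_apply_ne {N T : ℕ} (ω : Fin N → OTPath T) (j k : Fin N) (t : ℕ) (v : ℝ)
    (h : k ≠ j) : upd ω j t v k = ω k := Function.update_of_ne h _ _

lemma upd_apply_self {N T : ℕ} (ω : Fin N → OTPath T) (j : Fin N) (t : ℕ) (v : ℝ) :
    upd ω j t v j = set1 (ω j) t v := Function.update_self _ _ _

lemma trunc_set1 {T : ℕ} (x : OTPath T) (t s : ℕ) (v : ℝ) (hs : s ≤ t) :
    trunc (set1 x t v) s = trunc x s := by
  funext u
  simp only [trunc, set1]
  split_ifs with h1 h2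
  · omega
  · rfl
  · rfl

lemma trunc_trunc {T : ℕ} (x : OTPath T) (s t : ℕ) (hs : s ≤ t) :
    trunc (trunc x t) s = trunc x s := by
  funext u
  by_cases h1 : (u:ℕ) < s
  · simp only [trunc, if_pos h1, if_pos (lt_of_lt_of_le h1 hs)]
  · simp only [trunc, if_neg h1]

lemma trunc_upd {N T : ℕ} (ω : Fin N → OTPath T) (j k : Fin N) (t s : ℕ) (v : ℝ)
    (hs : s ≤ t) : trunc (upd ω j t v k) s = trunc (ω k) s := by
  by_cases h : k = j
  · subst h; rw [upd_apply_self, trunc_set1 _ _ _ _ hs]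
  · rw [upd_apply_ne _ _ _ _ _ h]

lemma ev_set1_self {T : ℕ} (x : OTPath T) (t : ℕ) (v : ℝ) (ht : t < T) :
    ev (set1 x t v) t = v := by
  simp [ev, set1, ht]

lemma ev_set1_ne {T : ℕ} (x : OTPath T) (t s : ℕ) (v : ℝ) (hs : s ≠ t) :
    ev (set1 x t v) s = ev x s := by
  simp only [ev, set1]
  split_ifs with h
  · simp [hs]
  · rfl

lemma ev_trunc {T : ℕ} (x : OTPath T) (t s : ℕ) (hs : s < t) :
    ev (trunc x t) s = ev x s := by
  simp only [ev, trunc]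
  split_ifs with h
  · simp [hs]
  · rfl
open scoped ENNReal

section Aux

variable {N T : ℕ}

open Classical in
/-- indicator of a proposition -/
def chi (p : Prop) : ℝ≥0∞ := if p then 1 else 0

lemma chi_true {p : Prop} (h : p) : chi p = 1 := by simp [chi, h]
lemma chi_false {p : Prop} (h : ¬ p) : chi p = 0 := by simp [chi, h]
lemma chi_congr {p q : Prop} (h : p ↔ q) : chi p = chi q := by
  by_cases hp : p
  · rw [chi_true hp, chi_true (h.mp hp)]
  · rw [chi_false hp, chi_false (fun hq => hp (h.mpr hq))]

lemma chi_le_one (p : Prop) : chi p ≤ 1 := by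
  by_cases hp : p
  · rw [chi_true hp]
  · rw [chi_false hp]; exact zero_le_one

lemma chi_eq_one_iff {p : Prop} : chi p = 1 ↔ p := by
  constructor
  · intro h
    by_contra hp
    rw [chi_false hp] at h
    simp at h
  · exact chi_true

/-- all coordinates satisfy the slice conditions at all times `< t` -/
def GoodLt (A : ℕ → Fin N → (Fin N → OTPath T) → Set ℝ) (t : ℕ)
    (ω : Fin N → OTPath T) : Prop :=
  ∀ i : Fin N, ∀ s : ℕ, s < t → ev (ω i) s ∈ A s i ω

variable (K : Fin N → ℕ → Kernel (OTPath T) ℝ)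

/-- iterated kernel integration over the time-`t` values of the coordinates in `l` -/
def stepL (t : ℕ) : List (Fin N) → ((Fin N → OTPath T) → ℝ≥0∞) →
    (Fin N → OTPath T) → ℝ≥0∞
  | [], F => F
  | j :: l, F => fun ω => ∫⁻ v, stepL t l F (upd ω j t v) ∂(K j t (ω j))

lemma measurable_upd (j : Fin N) (t : ℕ) :
    Measurable (fun p : (Fin N → OTPath T) × ℝ => upd p.1 j t p.2) := by
  apply measurable_pi_lambda
  intro k
  by_cases h : k = j
  · subst h
    have : (fun p : (Fin N → OTPath T) × ℝ => upd p.1 k t p.2 k)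
        = fun p => set1 (p.1 k) t p.2 := by
      funext p; rw [upd_apply_self]
    rw [this]
    apply measurable_pi_lambda
    intro u
    simp only [set1]
    by_cases hu : (u : ℕ) = t
    · simp only [hu, if_true]; exact measurable_snd
    · simp only [hu, if_false]
      exact (measurable_pi_apply u).comp ((measurable_pi_apply k).comp measurable_fst)
  · have : (fun p : (Fin N → OTPath T) × ℝ => upd p.1 j t p.2 k)
        = fun p => p.1 k := by
      funext p; rw [upd_apply_ne _ _ _ _ _ h]
    rw [this]
    exact (measurable_pi_apply k).comp measurable_fst

variable [∀ i t, IsMarkovKernel (K i t)]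

lemma stepL_measurable (t : ℕ) (l : List (Fin N)) (F : (Fin N → OTPath T) → ℝ≥0∞)
    (hF : Measurable F) : Measurable (stepL K t l F) := by
  induction l generalizing F with
  | nil => exact hF
  | cons j l ih =>
    show Measurable fun ω => ∫⁻ v, stepL K t l F (upd ω j t v) ∂(K j t (ω j))
    have : ∀ ω : Fin N → OTPath T, K j t (ω j)
        = ((K j t).comap (fun ω : Fin N → OTPath T => ω j) (measurable_pi_apply j)) ω :=
      fun ω => by rw [Kernel.comap_apply]
    simp_rw [this]
    exact Measurable.lintegral_kernel_prod_right
      ((ih F hF).comp (measurable_upd j t))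

end Aux
section Point

variable {N T : ℕ}
variable (A : ℕ → Fin N → (Fin N → OTPath T) → Set ℝ)

lemma A_upd (hAdep : ∀ t i ω ω', (∀ j, trunc (ω j) t = trunc (ω' j) t) → A t i ω = A t i ω')
    {s t : ℕ} (hs : s ≤ t) (i j : Fin N) (ω : Fin N → OTPath T) (v : ℝ) :
    A s i (upd ω j t v) = A s i ω :=
  hAdep s i _ _ (fun k => trunc_upd ω j k t s v hs)

lemma goodLt_upd (hAdep : ∀ t i ω ω', (∀ j, trunc (ω j) t = trunc (ω' j) t) → A t i ω = A t i ω')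
    {t : ℕ} (j : Fin N) (ω : Fin N → OTPath T) (v : ℝ) :
    GoodLt A t (upd ω j t v) ↔ GoodLt A t ω := by
  have hev : ∀ (i : Fin N) (s : ℕ), s < t → ev (upd ω j t v i) s = ev (ω i) s := by
    intro i s hs
    by_cases h : i = j
    · subst h; rw [upd_apply_self, ev_set1_ne _ _ _ _ (by omega)]
    · rw [upd_apply_ne _ _ _ _ _ h]
  constructor
  · intro hg i s hs
    have := hg i s hs
    rwa [hev i s hs, A_upd A hAdep (le_of_lt hs) i j ω v] at this
  · intro hg i s hs
    rw [hev i s hs, A_upd A hAdep (le_of_lt hs) i j ω v]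
    exact hg i s hs

variable (K : Fin N → ℕ → Kernel (OTPath T) ℝ) [∀ i t, IsMarkovKernel (K i t)]

lemma stepL_chi
    (hAdep : ∀ t i ω ω', (∀ j, trunc (ω j) t = trunc (ω' j) t) → A t i ω = A t i ω')
    (hfullK : ∀ i, ∀ t : ℕ, 1 ≤ t → t < T → ∀ ω : Fin N → OTPath T,
      (K i t) (ω i) {v : ℝ | v ∉ A t i ω} = 0)
    {t : ℕ} (ht1 : 1 ≤ t) (ht : t < T)
    (F : (Fin N → OTPath T) → ℝ≥0∞) (hF : ∀ ω, F ω = chi (GoodLt A (t + 1) ω)) :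
    ∀ l : List (Fin N), l.Nodup → ∀ ω,
      stepL K t l F ω
        = chi (GoodLt A t ω ∧ ∀ j, j ∉ l → ev (ω j) t ∈ A t j ω) := by
  intro l
  induction l with
  | nil =>
    intro _ ω
    have h0 : stepL K t List.nil F = F := rfl
    rw [h0, hF ω]
    apply chi_congr
    constructor
    · intro hg
      exact ⟨fun i s hs => hg i s (by omega), fun j _ => hg j t (by omega)⟩
    · rintro ⟨hg, hg'⟩ i s hs
      rcases Nat.lt_succ_iff_lt_or_eq.mp hs with h | h
      · exact hg i s h
      · subst h; exact hg' i List.not_mem_nil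
  | cons j l ih =>
    intro hnd ω
    have hjl : j ∉ l := (List.nodup_cons.mp hnd).1
    have hnd' : l.Nodup := (List.nodup_cons.mp hnd).2
    show (∫⁻ v, stepL K t l F (upd ω j t v) ∂(K j t (ω j))) = _
    set q : Prop := GoodLt A t ω ∧ ∀ k, k ∉ l → k ≠ j → ev (ω k) t ∈ A t k ω with hq_def
    have hint : ∀ v, stepL K t l F (upd ω j t v) = chi (q ∧ v ∈ A t j ω) := by
      intro v
      rw [ih hnd' (upd ω j t v)]
      apply chi_congr
      have hA' : ∀ k, A t k (upd ω j t v) = A t k ω :=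
        fun k => A_upd A hAdep le_rfl k j ω v
      constructor
      · rintro ⟨hg, hg'⟩
        have hgω : GoodLt A t ω := (goodLt_upd A hAdep j ω v).mp hg
        have hvA : v ∈ A t j ω := by
          have := hg' j hjl
          rwa [upd_apply_self, ev_set1_self _ _ _ ht, hA' j] at this
        refine ⟨⟨hgω, fun k hk hkj => ?_⟩, hvA⟩
        have := hg' k hk
        rwa [upd_apply_ne _ _ _ _ _ hkj, hA' k] at this
      · rintro ⟨⟨hg, hg'⟩, hvA⟩
        refine ⟨(goodLt_upd A hAdep j ω v).mpr hg, fun k hk => ?_⟩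
        by_cases hkj : k = j
        · subst hkj
          rw [upd_apply_self, ev_set1_self _ _ _ ht, hA' k]
          exact hvA
        · rw [upd_apply_ne _ _ _ _ _ hkj, hA' k]
          exact hg' k hk hkj
    calc (∫⁻ v, stepL K t l F (upd ω j t v) ∂(K j t (ω j)))
        = ∫⁻ v, chi (q ∧ v ∈ A t j ω) ∂(K j t (ω j)) := by
          exact lintegral_congr fun v => hint v
      _ = chi (GoodLt A t ω ∧ ∀ k, k ∉ j :: l → ev (ω k) t ∈ A t k ω) := by
          by_cases hq : q
          · have hae : ∀ᵐ v ∂(K j t (ω j)), v ∈ A t j ω := by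
              rw [ae_iff]
              exact hfullK j t ht1 ht ω
            have heq : (fun v => chi (q ∧ v ∈ A t j ω)) =ᵐ[K j t (ω j)]
                (fun _ => (1:ℝ≥0∞)) := hae.mono (fun v hv => chi_true ⟨hq, hv⟩)
            rw [lintegral_congr_ae heq, lintegral_one, measure_univ, chi_true]
            refine ⟨hq.1, fun k hk => ?_⟩
            simp only [List.mem_cons, not_or] at hk
            exact hq.2 k hk.2 hk.1
          · have h0 : ∀ v : ℝ, chi (q ∧ v ∈ A t j ω) = 0 :=
              fun v => chi_false (fun h => hq h.1)
            simp only [h0, lintegral_zero]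
            rw [chi_false]
            rintro ⟨hg, hg'⟩
            exact hq ⟨hg, fun k hk hkj => hg' k (by
              simp only [List.mem_cons, not_or]; exact ⟨hkj, hk⟩)⟩

variable (E' : Set (Fin N → OTPath T))

def fseq : ℕ → (Fin N → OTPath T) → ℝ≥0∞
  | 0 => E'ᶜ.indicator 1
  | n + 1 => stepL K (T - (n + 1)) (List.finRange N) (fseq n)

lemma fseq_measurable (hE'meas : MeasurableSet E') (n : ℕ) :
    Measurable (fseq K E' n) := by
  induction n with
  | zero => exact measurable_const.indicator hE'meas.compl
  | succ n ih => exact stepL_measurable K _ _ _ ih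

lemma fseq_chi
    (hE'def : E' = {ω : Fin N → OTPath T |
      ¬ ∀ i : Fin N, ∀ t : ℕ, t < T → ev (ω i) t ∈ A t i ω})
    (hAdep : ∀ t i ω ω', (∀ j, trunc (ω j) t = trunc (ω' j) t) → A t i ω = A t i ω')
    (hfullK : ∀ i, ∀ t : ℕ, 1 ≤ t → t < T → ∀ ω : Fin N → OTPath T,
      (K i t) (ω i) {v : ℝ | v ∉ A t i ω} = 0) :
    ∀ n, n + 1 ≤ T → ∀ ω, fseq K E' n ω = chi (GoodLt A (T - n) ω) := by
  intro n
  induction n with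
  | zero =>
    intro _ ω
    show E'ᶜ.indicator 1 ω = chi (GoodLt A (T - 0) ω)
    by_cases h : ω ∈ E'ᶜ
    · rw [Set.indicator_of_mem h, chi_true]
      · rfl
      · intro i s hs
        simp only [hE'def, Set.mem_compl_iff, Set.mem_setOf_eq, not_not] at h
        exact h i s (by omega)
    · rw [Set.indicator_of_notMem h, chi_false]
      intro hg
      apply h
      simp only [hE'def, Set.mem_compl_iff, Set.mem_setOf_eq, not_not]
      intro i s hs
      exact hg i s (by omega)
  | succ n ih =>
    intro hn ω
    have ht1 : 1 ≤ T - (n + 1) := by omega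
    have ht : T - (n + 1) < T := by omega
    have htn : T - (n + 1) + 1 = T - n := by omega
    show stepL K (T - (n + 1)) (List.finRange N) (fseq K E' n) ω = _
    rw [stepL_chi A K hAdep hfullK ht1 ht (fseq K E' n)
      (fun ω' => by rw [ih (by omega) ω', htn]) (List.finRange N)
      (List.nodup_finRange N) ω]
    apply chi_congr
    constructor
    · rintro ⟨hg, _⟩ i s hs
      exact hg i s (by omega)
    · intro hg
      exact ⟨fun i s hs => hg i s (by omega),
        fun j hj => absurd (List.mem_finRange j) hj⟩

end Point
section Filtration

variable {N T : ℕ}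

lemma filt_le (T t : ℕ) : filt T t ≤ (inferInstance : MeasurableSpace (OTPath T)) :=
  iSup_le fun s => Measurable.comap_le (measurable_pi_apply s.1)

lemma filt_mono {T t1 t2 : ℕ} (h : t1 ≤ t2) : filt T t1 ≤ filt T t2 :=
  iSup_le fun s => le_iSup_of_le ⟨s.1, lt_of_lt_of_le s.2 h⟩ le_rfl

lemma filtI_mono {N T : ℕ} (i : Fin N) {t1 t2 : ℕ} (h : t1 ≤ t2) :
    filtI N T i t1 ≤ filtI N T i t2 :=
  iSup_le fun s => le_iSup_of_le ⟨s.1, lt_of_lt_of_le s.2 h⟩ le_rfl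

lemma filtOthers_le (N T : ℕ) (i : Fin N) (t : ℕ) :
    filtOthers N T i t ≤ (inferInstance : MeasurableSpace (Fin N → OTPath T)) :=
  iSup_le fun j => filtI_le N T j.1 t

lemma filtI_eq_comap (N T : ℕ) (i : Fin N) (t : ℕ) :
    filtI N T i t
      = MeasurableSpace.comap (fun ω : Fin N → OTPath T => ω i) (filt T t) := by
  rw [filt, MeasurableSpace.comap_iSup]
  apply le_antisymm
  · refine iSup_le fun s => ?_
    refine le_iSup_of_le s ?_
    rw [MeasurableSpace.comap_comp]
    exact le_rfl
  · refine iSup_le fun s => ?_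
    refine le_iSup_of_le s ?_
    rw [MeasurableSpace.comap_comp]
    exact le_rfl

lemma measurable_eval_filtI {N T : ℕ} (i : Fin N) {t : ℕ} (s : Fin T) (hs : (s : ℕ) < t) :
    Measurable[filtI N T i t] (fun ω : Fin N → OTPath T => ω i s) := by
  apply Measurable.of_comap_le
  exact le_iSup_of_le ⟨s, hs⟩ le_rfl

/-- membership in a `filtOthers j t`-measurable set is insensitive to coordinate `j` -/
lemma filtOthers_invariant {N T : ℕ} (j : Fin N) (t : ℕ) {s : Set (Fin N → OTPath T)}
    (hs : MeasurableSet[filtOthers N T j t] s) (ω : Fin N → OTPath T) (x : OTPath T) :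
    Function.update ω j x ∈ s ↔ ω ∈ s := by
  classical
  set p : (Fin N → OTPath T) → ({k : Fin N // k ≠ j} → OTPath T) :=
    fun ω k => ω k.1 with hp
  have hle : filtOthers N T j t ≤ MeasurableSpace.comap p inferInstance := by
    refine iSup_le fun k => iSup_le fun u => ?_
    have : (fun ω : Fin N → OTPath T => ω k.1 u.1)
        = (fun q : {k : Fin N // k ≠ j} → OTPath T => q k u.1) ∘ p := rfl
    rw [this, ← MeasurableSpace.comap_comp]
    exact MeasurableSpace.comap_mono
      (Measurable.comap_le ((measurable_pi_apply u.1).comp (measurable_pi_apply k)))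
  obtain ⟨s', -, rfl⟩ := hle s hs
  have hpu : p (Function.update ω j x) = p ω := by
    funext k
    exact Function.update_of_ne k.2 _ _
  simp only [Set.mem_preimage, hpu]

end Filtration
section Transfer

/-- conditional expectation with respect to the comap σ-algebra of a coordinate projection,
computed via the pushforward measure -/
lemma condexp_comap_proj {N T : ℕ} (t : ℕ) (π : Measure (Fin N → OTPath T))
    [IsFiniteMeasure π] (j : Fin N) (ν : Measure (OTPath T)) [IsFiniteMeasure ν]
    (hν : π.map (fun ω => ω j) = ν)
    (g : OTPath T → ℝ) (hg : StronglyMeasurable g) (hgint : Integrable g ν) :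
    π[g ∘ (fun ω : Fin N → OTPath T => ω j) |
        (filt T t).comap (fun ω : Fin N → OTPath T => ω j)]
      =ᵐ[π] (ν[g | filt T t]) ∘ (fun ω : Fin N → OTPath T => ω j) := by
  set f : (Fin N → OTPath T) → OTPath T := fun ω => ω j with hf_def
  have hmβ : filt T t ≤ (inferInstance : MeasurableSpace (OTPath T)) := filt_le T t
  have hf : Measurable f := measurable_pi_apply j
  have hcle : (filt T t).comap f ≤ (inferInstance : MeasurableSpace (Fin N → OTPath T)) :=
    (MeasurableSpace.comap_mono hmβ).trans hf.comap_le
  have hgf : Integrable (g ∘ f) π := by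
    rw [← hν] at hgint
    exact (integrable_map_measure hg.aestronglyMeasurable hf.aemeasurable).mp hgint
  have hcondsm : StronglyMeasurable[filt T t] (ν[g | filt T t]) := stronglyMeasurable_condExp
  have hcondamb : AEStronglyMeasurable (ν[g | filt T t]) (π.map f) := by
    rw [hν]
    exact (hcondsm.mono hmβ).aestronglyMeasurable
  have hcondint : Integrable ((ν[g | filt T t]) ∘ f) π := by
    have : Integrable (ν[g | filt T t]) (π.map f) := by rw [hν]; exact integrable_condExp
    exact (integrable_map_measure hcondamb hf.aemeasurable).mp this
  symm
  refine ae_eq_condExp_of_forall_setIntegral_eq hcle hgf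
    (fun s _ _ => hcondint.integrableOn) ?_ ?_
  · rintro s ⟨s', hs', rfl⟩ -
    have hs'amb : MeasurableSet s' := hmβ s' hs'
    have h1 : ∫ x in f ⁻¹' s', (ν[g | filt T t]) (f x) ∂π
        = ∫ y in s', (ν[g | filt T t]) y ∂(π.map f) :=
      (setIntegral_map hs'amb hcondamb hf.aemeasurable).symm
    have h2 : ∫ x in f ⁻¹' s', g (f x) ∂π = ∫ y in s', g y ∂(π.map f) := by
      rw [setIntegral_map hs'amb (by rw [hν]; exact hg.aestronglyMeasurable) hf.aemeasurable]
    calc ∫ x in f ⁻¹' s', ((ν[g | filt T t]) ∘ f) x ∂π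
        = ∫ y in s', (ν[g | filt T t]) y ∂(π.map f) := h1
      _ = ∫ y in s', g y ∂ν := by rw [hν]; exact setIntegral_condExp hmβ hgint hs'
      _ = ∫ x in f ⁻¹' s', (g ∘ f) x ∂π := by rw [hν] at h2; rw [← h2]; rfl
  · exact (hcondsm.comp_measurable (Measurable.of_comap_le le_rfl)).aestronglyMeasurable

end Transfer
section Core

def sigN (N T : ℕ) (j : Fin N) (t : ℕ) : MeasurableSpace (Fin N → OTPath T) :=
  filtI N T j (t + 1) ⊔ filtOthers N T j t

lemma sigN_le (N T : ℕ) (j : Fin N) (t : ℕ) :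
    sigN N T j t ≤ (inferInstance : MeasurableSpace (Fin N → OTPath T)) :=
  sup_le (filtI_le N T j (t + 1)) (filtOthers_le N T j t)

lemma measurable_upd_fixed {N T : ℕ} (ω : Fin N → OTPath T) (j : Fin N) (t : ℕ) :
    Measurable (fun v : ℝ => upd ω j t v) :=
  (measurable_upd j t).comp (measurable_const.prodMk measurable_id)

lemma core_identity {N T : ℕ}
    (P : Fin N → Measure (OTPath T)) [∀ i, IsProbabilityMeasure (P i)]
    (K : Fin N → ℕ → Kernel (OTPath T) ℝ) [∀ i t, IsMarkovKernel (K i t)]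
    (hK : ∀ i, ∀ t : ℕ, 1 ≤ t → t < T → ∀ h : OTPath T → ℝ,
      Measurable[filt T (t + 1)] h → Integrable h (P i) →
      (P i)[h | filt T t] =ᵐ[P i] fun x => ∫ v, h (set1 x t v) ∂(K i t x))
    (π : Measure (Fin N → OTPath T)) [IsProbabilityMeasure π]
    (hmarg : ∀ i, π.map (fun ω => ω i) = P i)
    (hmc : Multicausal N T π)
    (j : Fin N) {t : ℕ} (ht1 : 1 ≤ t) (ht : t < T)
    (Y : (Fin N → OTPath T) → ℝ≥0∞) (hYmeas : Measurable Y)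
    (hYinv : ∀ ω, Y (fun k => if k = j then trunc (ω j) (t + 1) else trunc (ω k) t) = Y ω) :
    ∫⁻ ω, Y ω ∂π = ∫⁻ ω, ∫⁻ v, Y (upd ω j t v) ∂(K j t (ω j)) ∂π := by
  classical
  set πj : (Fin N → OTPath T) → OTPath T := fun ω => ω j with hπj_def
  have hπjm : Measurable πj := measurable_pi_apply j
  -- the "updated" kernel family and its bind
  set mker : (Fin N → OTPath T) → Measure (Fin N → OTPath T) :=
    fun ω => (K j t (ω j)).map (upd ω j t) with hmker_def
  have hmker : Measurable mker := by
    apply Measure.measurable_of_measurable_coe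
    intro s hs
    have heq : (fun ω => mker ω s)
        = fun ω => ((K j t).comap πj hπjm) ω (Prod.mk ω ⁻¹' {p : (Fin N → OTPath T) × ℝ |
            upd p.1 j t p.2 ∈ s}) := by
      funext ω
      simp only [hmker_def]
      rw [Measure.map_apply (measurable_upd_fixed ω j t) hs, Kernel.comap_apply]
      rfl
    rw [heq]
    exact Kernel.measurable_kernel_prodMk_left ((measurable_upd j t) hs)
  set π' : Measure (Fin N → OTPath T) := π.bind mker with hπ'_def
  have hmker_univ : ∀ ω, mker ω Set.univ = 1 := by
    intro ω
    simp only [hmker_def]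
    rw [Measure.map_apply (measurable_upd_fixed ω j t) MeasurableSet.univ]
    simp
  have hπ'univ : π' Set.univ = 1 := by
    rw [hπ'_def, Measure.bind_apply MeasurableSet.univ hmker.aemeasurable]
    simp [hmker_univ]
  haveI : IsProbabilityMeasure π' := ⟨hπ'univ⟩
  -- the rectangle identity
  have rect : ∀ S1 : Set (OTPath T), ∀ s2 : Set (Fin N → OTPath T),
      MeasurableSet[filt T (t + 1)] S1 → MeasurableSet[filtOthers N T j t] s2 →
      π (πj ⁻¹' S1 ∩ s2) = π' (πj ⁻¹' S1 ∩ s2) := by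
    intro S1 s2 hS1 hs2
    have hS1amb : MeasurableSet S1 := filt_le T (t + 1) S1 hS1
    have hA'amb : MeasurableSet (πj ⁻¹' S1) := hπjm hS1amb
    have hs2amb : MeasurableSet s2 := filtOthers_le N T j t s2 hs2
    have hrectamb : MeasurableSet (πj ⁻¹' S1 ∩ s2) := hA'amb.inter hs2amb
    -- conditional independence
    have hA'F : MeasurableSet[filtI N T j T] (πj ⁻¹' S1) := by
      rw [filtI_eq_comap]
      exact ⟨S1, filt_mono (by omega) S1 hS1, rfl⟩
    have hCI := hmc j t ht1 (le_of_lt ht)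
    have hprod := (condIndep_iff (filtI N T j t) (filtI N T j T) (filtOthers N T j t)
      (filtI_le N T j t) (filtI_le N T j T) (filtOthers_le N T j t) π).mp hCI
      (πj ⁻¹' S1) s2 hA'F hs2
    set u : (Fin N → OTPath T) → ℝ :=
      π[(πj ⁻¹' S1).indicator (fun _ => (1:ℝ)) | filtI N T j t] with hu_def
    set g2 : (Fin N → OTPath T) → ℝ := s2.indicator (fun _ => (1:ℝ)) with hg2_def
    have hg2int : Integrable g2 π := (integrable_const (1:ℝ)).indicator hs2amb
    have husm : StronglyMeasurable[filtI N T j t] u := stronglyMeasurable_condExp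
    have hubdd : ∀ᵐ ω ∂π, |u ω| ≤ 1 := by
      refine ae_bdd_condExp_of_ae_bdd (R := 1) ?_
      refine Filter.Eventually.of_forall fun ω => ?_
      by_cases hω : ω ∈ πj ⁻¹' S1 <;> simp [Set.indicator_apply, hω]
    have hug2int : Integrable (u * g2) π := by
      refine Integrable.bdd_mul (c := 1) hg2int
        ((husm.mono (filtI_le N T j t)).aestronglyMeasurable) ?_
      exact hubdd.mono fun ω h => by simpa using h
    -- step A
    have stepA : (π (πj ⁻¹' S1 ∩ s2)).toReal = ∫ ω, u ω * g2 ω ∂π := by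
      have e1 : (π (πj ⁻¹' S1 ∩ s2)).toReal
          = ∫ ω, (πj ⁻¹' S1 ∩ s2).indicator (fun _ => (1:ℝ)) ω ∂π :=
        (integral_indicator_one hrectamb).symm
      have e2 : ∫ ω, (πj ⁻¹' S1 ∩ s2).indicator (fun _ => (1:ℝ)) ω ∂π
          = ∫ ω, (π[(πj ⁻¹' S1 ∩ s2).indicator (fun _ => (1:ℝ)) | filtI N T j t]) ω ∂π :=
        (integral_condExp (filtI_le N T j t)).symm
      have e3 : ∫ ω, (π[(πj ⁻¹' S1 ∩ s2).indicator (fun _ => (1:ℝ)) | filtI N T j t]) ω ∂π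
          = ∫ ω, (u * π[g2 | filtI N T j t]) ω ∂π := integral_congr_ae hprod
      have e4 : ∫ ω, (u * π[g2 | filtI N T j t]) ω ∂π
          = ∫ ω, (π[u * g2 | filtI N T j t]) ω ∂π :=
        (integral_congr_ae (condExp_mul_of_stronglyMeasurable_left husm hug2int hg2int)).symm
      have e5 : ∫ ω, (π[u * g2 | filtI N T j t]) ω ∂π = ∫ ω, (u * g2) ω ∂π :=
        integral_condExp (filtI_le N T j t)
      rw [e1, e2, e3, e4, e5]
      rfl
    -- step B : identify u
    set Vker : (Fin N → OTPath T) → ℝ≥0∞ :=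
      fun ω => K j t (ω j) ((fun v => set1 (ω j) t v) ⁻¹' S1) with hVker_def
    have hVpre_meas : ∀ x : OTPath T, MeasurableSet ((fun v => set1 x t v) ⁻¹' S1) := by
      intro x
      have : Measurable (fun v => set1 x t v) := by
        apply measurable_pi_lambda
        intro u'
        simp only [set1]
        by_cases hu : (u' : ℕ) = t
        · simp only [hu, if_true]; exact measurable_id
        · simp only [hu, if_false]; exact measurable_const
      exact this hS1amb
    have stepB : u =ᵐ[π] fun ω => (Vker ω).toReal := by
      set h : OTPath T → ℝ := S1.indicator (fun _ => (1:ℝ)) with hh_def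
      have hhf : Measurable[filt T (t + 1)] h :=
        (@measurable_const ℝ _ _ (filt T (t + 1)) (1:ℝ)).indicator hS1
      have hhamb : Measurable h := measurable_const.indicator hS1amb
      have hhint : Integrable h (P j) := (integrable_const (1:ℝ)).indicator hS1amb
      have step1 := hK j t ht1 ht h hhf hhint
      have htrans := condexp_comap_proj t π j (P j) (hmarg j) h
        hhamb.stronglyMeasurable hhint
      have hcomp : h ∘ πj = (πj ⁻¹' S1).indicator (fun _ => (1:ℝ)) := by
        funext ω
        by_cases hω : πj ω ∈ S1 <;>
          simp [hh_def, Set.indicator_apply, hω, Function.comp]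
      have hm1c : filtI N T j t = (filt T t).comap πj := filtI_eq_comap N T j t
      have hpull : ((P j)[h | filt T t]) ∘ πj
          =ᵐ[π] (fun x => ∫ v, h (set1 x t v) ∂(K j t x)) ∘ πj := by
        have hmapae : ∀ᵐ x ∂(π.map πj),
            ((P j)[h | filt T t]) x = ∫ v, h (set1 x t v) ∂(K j t x) := by
          rw [hmarg j]; exact step1
        exact ae_of_ae_map hπjm.aemeasurable hmapae
      have hval : ∀ x : OTPath T,
          (∫ v, h (set1 x t v) ∂(K j t x))
            = (K j t x ((fun v => set1 x t v) ⁻¹' S1)).toReal := by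
        intro x
        have heq : (fun v => h (set1 x t v))
            = ((fun v => set1 x t v) ⁻¹' S1).indicator (fun _ => (1:ℝ)) := by
          funext v
          by_cases hv : set1 x t v ∈ S1 <;>
            simp [hh_def, Set.indicator_apply, hv]
        rw [heq]
        exact integral_indicator_one (hVpre_meas x)
      calc u =ᵐ[π] π[h ∘ πj | (filt T t).comap πj] := by
            rw [hu_def, ← hcomp, hm1c]
        _ =ᵐ[π] ((P j)[h | filt T t]) ∘ πj := htrans
        _ =ᵐ[π] (fun x => ∫ v, h (set1 x t v) ∂(K j t x)) ∘ πj := hpull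
        _ = fun ω => (Vker ω).toReal := by
            funext ω
            exact hval (πj ω)
    -- step C/D : lintegral form and identification with π'
    set W : (Fin N → OTPath T) → ℝ≥0∞ := s2.indicator Vker with hW_def
    have hVkermeas : Measurable Vker := by
      have heq : Vker = fun ω => ((K j t).comap πj hπjm) ω
          (Prod.mk ω ⁻¹' {p : (Fin N → OTPath T) × ℝ | set1 (p.1 j) t p.2 ∈ S1}) := by
        funext ω
        simp only [hVker_def]
        rw [Kernel.comap_apply]
        rfl
      rw [heq]
      refine Kernel.measurable_kernel_prodMk_left ?_
      have heq2 : {p : (Fin N → OTPath T) × ℝ | set1 (p.1 j) t p.2 ∈ S1}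
          = (fun p : (Fin N → OTPath T) × ℝ => upd p.1 j t p.2 j) ⁻¹' S1 := by
        ext p
        simp [upd_apply_self]
      rw [heq2]
      exact ((measurable_pi_apply j).comp (measurable_upd j t)) hS1amb
    have hWmeas : Measurable W := hVkermeas.indicator hs2amb
    have hWle : ∀ ω, W ω ≤ 1 := by
      intro ω
      simp only [hW_def]
      by_cases hω : ω ∈ s2
      · rw [Set.indicator_of_mem hω]; exact prob_le_one
      · rw [Set.indicator_of_notMem hω]; exact zero_le_one
    have hWfin : ∫⁻ ω, W ω ∂π ≠ ⊤ := by
      refine ne_top_of_le_ne_top (by simp : (1:ℝ≥0∞) * π Set.univ ≠ ⊤) ?_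
      calc ∫⁻ ω, W ω ∂π ≤ ∫⁻ _, 1 ∂π := lintegral_mono hWle
        _ = 1 * π Set.univ := by rw [lintegral_const]
    have hWtoReal : (∫⁻ ω, W ω ∂π).toReal = ∫ ω, u ω * g2 ω ∂π := by
      have h1 : ∫ ω, (W ω).toReal ∂π = (∫⁻ ω, W ω ∂π).toReal :=
        integral_toReal hWmeas.aemeasurable
          (Filter.Eventually.of_forall fun ω =>
            lt_of_le_of_lt (hWle ω) ENNReal.one_lt_top)
      rw [← h1]
      refine integral_congr_ae ?_
      filter_upwards [stepB] with ω hω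
      simp only [hW_def]
      by_cases hmem : ω ∈ s2
      · rw [Set.indicator_of_mem hmem, ← hω, hg2_def, Set.indicator_of_mem hmem]
        simp
      · rw [Set.indicator_of_notMem hmem, hg2_def, Set.indicator_of_notMem hmem]
        simp
    have hπrect : π (πj ⁻¹' S1 ∩ s2) = ∫⁻ ω, W ω ∂π := by
      have hh := stepA
      rw [← hWtoReal] at hh
      exact (ENNReal.toReal_eq_toReal_iff' (measure_ne_top π _) hWfin).mp hh
    -- compute π' on the rectangle
    have hπ'rect : π' (πj ⁻¹' S1 ∩ s2) = ∫⁻ ω, W ω ∂π := by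
      rw [hπ'_def, Measure.bind_apply hrectamb hmker.aemeasurable]
      refine lintegral_congr fun ω => ?_
      simp only [hmker_def]
      rw [Measure.map_apply (measurable_upd_fixed ω j t) hrectamb]
      have hpre : (fun v => upd ω j t v) ⁻¹' (πj ⁻¹' S1 ∩ s2)
          = ((fun v => set1 (ω j) t v) ⁻¹' S1) ∩ {v : ℝ | ω ∈ s2} := by
        ext v
        simp only [Set.mem_preimage, Set.mem_inter_iff, Set.mem_setOf_eq]
        constructor
        · rintro ⟨h1, h2⟩
          refine ⟨by simpa only [hπj_def, upd_apply_self] using h1, ?_⟩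
          exact (filtOthers_invariant j t hs2 ω (set1 (ω j) t v)).mp h2
        · rintro ⟨h1, h2⟩
          constructor
          · show πj (upd ω j t v) ∈ S1
            simpa only [hπj_def, upd_apply_self] using h1
          · exact (filtOthers_invariant j t hs2 ω (set1 (ω j) t v)).mpr h2
      rw [hpre]
      simp only [hW_def]
      by_cases hmem : ω ∈ s2
      · rw [Set.indicator_of_mem hmem]
        have huniv : ({v : ℝ | ω ∈ s2} : Set ℝ) = Set.univ := by
          ext v; simp [hmem]
        rw [huniv, Set.inter_univ]
      · rw [Set.indicator_of_notMem hmem]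
        have hempty : ({v : ℝ | ω ∈ s2} : Set ℝ) = ∅ := by
          ext v; simp [hmem]
        rw [hempty, Set.inter_empty]
        simp
    rw [hπrect, hπ'rect]
  -- extend to the whole σ-algebra by a π-system argument
  have key : ∀ s : Set (Fin N → OTPath T), MeasurableSet[sigN N T j t] s → π s = π' s := by
    set PS : Set (Set (Fin N → OTPath T)) :=
      {s | ∃ S1 : Set (OTPath T), ∃ s2 : Set (Fin N → OTPath T),
        MeasurableSet[filt T (t + 1)] S1 ∧ MeasurableSet[filtOthers N T j t] s2 ∧
        s = πj ⁻¹' S1 ∩ s2} with hPS_def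
    have hgen : sigN N T j t = MeasurableSpace.generateFrom PS := by
      apply le_antisymm
      · apply sup_le
        · intro s hs
          rw [filtI_eq_comap] at hs
          obtain ⟨S1, hS1, rfl⟩ := hs
          apply MeasurableSpace.measurableSet_generateFrom
          exact ⟨S1, Set.univ, hS1, @MeasurableSet.univ _ (filtOthers N T j t),
            by rw [Set.inter_univ]⟩
        · intro s hs
          apply MeasurableSpace.measurableSet_generateFrom
          refine ⟨Set.univ, s, @MeasurableSet.univ _ (filt T (t + 1)), hs, ?_⟩
          rw [Set.preimage_univ, Set.univ_inter]
      · apply MeasurableSpace.generateFrom_le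
        rintro s ⟨S1, s2, hS1, hs2, rfl⟩
        have h1 : MeasurableSet[sigN N T j t] (πj ⁻¹' S1) := by
          refine (le_sup_left : filtI N T j (t + 1) ≤ sigN N T j t) _ ?_
          rw [filtI_eq_comap]
          exact ⟨S1, hS1, rfl⟩
        have h2 : MeasurableSet[sigN N T j t] s2 :=
          (le_sup_right : filtOthers N T j t ≤ sigN N T j t) _ hs2
        exact h1.inter h2
    have hpi : IsPiSystem PS := by
      rintro a ⟨S1a, s2a, hS1a, hs2a, rfl⟩ b ⟨S1b, s2b, hS1b, hs2b, rfl⟩ -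
      refine ⟨S1a ∩ S1b, s2a ∩ s2b, hS1a.inter hS1b, hs2a.inter hs2b, ?_⟩
      rw [Set.preimage_inter]
      ext ω
      simp only [Set.mem_inter_iff, Set.mem_preimage]
      tauto
    intro s hs
    refine MeasurableSpace.induction_on_inter (m := sigN N T j t)
      (C := fun s _ => π s = π' s) hgen hpi ?_ ?_ ?_ ?_ s hs
    · simp
    · rintro v ⟨S1, s2, hS1, hs2, rfl⟩
      exact rect S1 s2 hS1 hs2
    · intro v hv hCv
      have hvamb : MeasurableSet v := sigN_le N T j t v hv
      rw [measure_compl hvamb (measure_ne_top π v),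
        measure_compl hvamb (measure_ne_top π' v), hCv, measure_univ, measure_univ]
    · intro f hdisj hfm hCf
      rw [measure_iUnion hdisj (fun i => sigN_le N T j t _ (hfm i)),
        measure_iUnion hdisj (fun i => sigN_le N T j t _ (hfm i))]
      exact tsum_congr hCf
  -- Y is sigN-measurable
  have hY𝔑 : Measurable[sigN N T j t] Y := by
    set Θ : (Fin N → OTPath T) → (Fin N → OTPath T) :=
      fun ω k => if k = j then trunc (ω j) (t + 1) else trunc (ω k) t with hΘ_def
    have hΘmeas : Measurable[sigN N T j t] Θ := by
      refine @measurable_pi_lambda _ _ _ (sigN N T j t) _ Θ fun k => ?_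
      by_cases hk : k = j
      · subst hk
        have heqk : (fun ω : Fin N → OTPath T => Θ ω k)
            = fun ω => trunc (ω k) (t + 1) := by
          funext ω; simp [hΘ_def]
        rw [heqk]
        refine @measurable_pi_lambda _ _ _ (sigN N T k t) _ _ fun u' => ?_
        by_cases hu : (u' : ℕ) < t + 1
        · have heq' : (fun ω : Fin N → OTPath T => trunc (ω k) (t + 1) u')
              = fun ω => ω k u' := by
            funext ω; simp [trunc, hu]
          rw [heq']
          exact (measurable_eval_filtI k u' hu).mono
            (le_sup_left : filtI N T k (t + 1) ≤ sigN N T k t) le_rfl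
        · have heq' : (fun ω : Fin N → OTPath T => trunc (ω k) (t + 1) u')
              = fun _ => 0 := by
            funext ω; simp [trunc, hu]
          rw [heq']
          exact measurable_const
      · have heqk : (fun ω : Fin N → OTPath T => Θ ω k)
            = fun ω => trunc (ω k) t := by
          funext ω; simp [hΘ_def, hk]
        rw [heqk]
        refine @measurable_pi_lambda _ _ _ (sigN N T j t) _ _ fun u' => ?_
        by_cases hu : (u' : ℕ) < t
        · have heq' : (fun ω : Fin N → OTPath T => trunc (ω k) t u')
              = fun ω => ω k u' := by
            funext ω; simp [trunc, hu]
          rw [heq']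
          refine (measurable_eval_filtI k u' hu).mono ?_ le_rfl
          refine le_trans ?_ (le_sup_right : filtOthers N T j t ≤ sigN N T j t)
          exact le_iSup (fun k' : {k' : Fin N // k' ≠ j} => filtI N T k'.1 t) ⟨k, hk⟩
        · have heq' : (fun ω : Fin N → OTPath T => trunc (ω k) t u')
              = fun _ => 0 := by
            funext ω; simp [trunc, hu]
          rw [heq']
          exact measurable_const
    have hYeq : Y = Y ∘ Θ := by
      funext ω
      exact (hYinv ω).symm
    rw [hYeq]
    exact hYmeas.comp hΘmeas
  -- conclude
  have htrim_eq : π.trim (sigN_le N T j t) = π'.trim (sigN_le N T j t) := by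
    refine @Measure.ext _ (sigN N T j t) _ _ fun s hs => ?_
    rw [trim_measurableSet_eq (sigN_le N T j t) hs,
      trim_measurableSet_eq (sigN_le N T j t) hs, key s hs]
  calc ∫⁻ ω, Y ω ∂π = ∫⁻ ω, Y ω ∂(π.trim (sigN_le N T j t)) :=
        (lintegral_trim (sigN_le N T j t) hY𝔑).symm
    _ = ∫⁻ ω, Y ω ∂(π'.trim (sigN_le N T j t)) := by rw [htrim_eq]
    _ = ∫⁻ ω, Y ω ∂π' := lintegral_trim (sigN_le N T j t) hY𝔑
    _ = ∫⁻ ω, ∫⁻ x, Y x ∂(mker ω) ∂π := by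
        rw [hπ'_def]
        exact Measure.lintegral_bind hmker.aemeasurable hYmeas.aemeasurable
    _ = ∫⁻ ω, ∫⁻ v, Y (upd ω j t v) ∂(K j t (ω j)) ∂π := by
        refine lintegral_congr fun ω => ?_
        simp only [hmker_def]
        rw [lintegral_map hYmeas (measurable_upd_fixed ω j t)]

end Core
section Final

lemma ae_eq_one_of_lintegral_eq_one {α : Type*} [MeasurableSpace α] (μ : Measure α)
    [IsProbabilityMeasure μ] {f : α → ℝ≥0∞} (hf : Measurable f)
    (hle : ∀ x, f x ≤ 1) (hint : ∫⁻ x, f x ∂μ = 1) : f =ᵐ[μ] fun _ => 1 := by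
  have hsub : ∫⁻ x, (1 - f x) ∂μ = 0 := by
    rw [lintegral_sub hf (by rw [hint]; exact ENNReal.one_ne_top)
      (Filter.Eventually.of_forall hle), hint, lintegral_one, measure_univ, tsub_self]
  have h0 := (lintegral_eq_zero_iff (measurable_const.sub hf)).mp hsub
  filter_upwards [h0] with x hx
  have hx' : (1 : ℝ≥0∞) - f x = 0 := hx
  exact le_antisymm (hle x) (by rwa [tsub_eq_zero_iff_le] at hx')

end Final
/-- Sufficiency of full product-structured sets for multicausal polarity: the complement of
a glued set built from full slices is null for every multicausal coupling; hence any Borel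
subset of it is polar. -/
theorem multicausal_polar_sufficiency
    (N T : ℕ) (P : Fin N → Measure (OTPath T)) [∀ i, IsProbabilityMeasure (P i)]
    (K : Fin N → ℕ → Kernel (OTPath T) ℝ) [∀ i t, IsMarkovKernel (K i t)]
    (hKdep : ∀ i t x y, trunc x t = trunc y t → K i t x = K i t y)
    -- `K i t` is the one-step disintegration of `P i`
    (hK : ∀ i, ∀ t : ℕ, 1 ≤ t → t < T → ∀ h : OTPath T → ℝ,
      Measurable[filt T (t + 1)] h → Integrable h (P i) →
      (P i)[h | filt T t] =ᵐ[P i] fun x => ∫ v, h (set1 x t v) ∂(K i t x))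
    -- the slices of the glued set
    (A : ℕ → Fin N → (Fin N → OTPath T) → Set ℝ)
    -- slices depend only on the history up to time t
    (hAdep : ∀ t i ω ω', (∀ j, trunc (ω j) t = trunc (ω' j) t) → A t i ω = A t i ω')
    -- the time-0 slices are `P^i`-full
    (hfull0 : ∀ i, P i {x : OTPath T | ev x 0 ∉ A 0 i (fun _ => 0)} = 0)
    -- the later slices are full for the corresponding kernels
    (hfullK : ∀ i, ∀ t : ℕ, 1 ≤ t → t < T → ∀ ω : Fin N → OTPath T,
      (K i t) (ω i) {v : ℝ | v ∉ A t i ω} = 0)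
    -- the glued set and its complement E'
    (E' : Set (Fin N → OTPath T))
    (hE'def : E' = {ω : Fin N → OTPath T |
      ¬ ∀ i : Fin N, ∀ t : ℕ, t < T → ev (ω i) t ∈ A t i ω})
    (hE'meas : MeasurableSet E')
    (E : Set (Fin N → OTPath T)) (hEmeas : MeasurableSet E) (hEE' : E ⊆ E') :
    ∀ π : ProbabilityMeasure (Fin N → OTPath T),
      (∀ i, (π : Measure (Fin N → OTPath T)).map (fun ω => ω i) = P i) →
      Multicausal N T (π : Measure (Fin N → OTPath T)) →
      (π : Measure (Fin N → OTPath T)) E' = 0 ∧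
      (π : Measure (Fin N → OTPath T)) E = 0 := by
  intro π hmarg hmc
  set πm : Measure (Fin N → OTPath T) := (π : Measure (Fin N → OTPath T)) with hπm_def
  suffices hE' : πm E' = 0 by
    exact ⟨hE', measure_mono_null hEE' hE'⟩
  by_cases hT : T = 0
  · have : E' = ∅ := by
      rw [hE'def]
      ext ω
      simp only [Set.mem_setOf_eq, Set.mem_empty_iff_false, iff_false, not_not]
      intro i s hs
      omega
    rw [this]
    exact measure_empty
  have hT1 : 1 ≤ T := by omega
  -- main induction : fseq (T - 1 - m) is a.e. 1
  have main : ∀ m : ℕ, m ≤ T - 1 → ∀ᵐ ω ∂πm, fseq K E' (T - 1 - m) ω = 1 := by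
    intro m
    induction m with
    | zero =>
      intro _
      -- base case : time-0 conditions
      have hgood : ∀ᵐ ω ∂πm, GoodLt A 1 ω := by
        rw [ae_iff]
        have hsub : {ω : Fin N → OTPath T | ¬ GoodLt A 1 ω}
            ⊆ ⋃ i : Fin N, (fun ω : Fin N → OTPath T => ω i) ⁻¹'
              {x : OTPath T | ev x 0 ∉ A 0 i (fun _ => 0)} := by
          intro ω hω
          simp only [Set.mem_setOf_eq, GoodLt] at hω
          push_neg at hω
          obtain ⟨i, s, hs, hev⟩ := hω
          have hs0 : s = 0 := by omega
          subst hs0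
          have hA0 : A 0 i ω = A 0 i (fun _ => 0) := by
            apply hAdep
            intro k
            funext u
            simp [trunc]
          rw [hA0] at hev
          exact Set.mem_iUnion.mpr ⟨i, hev⟩
        have hzero : ∀ i : Fin N, πm ((fun ω : Fin N → OTPath T => ω i) ⁻¹'
            {x : OTPath T | ev x 0 ∉ A 0 i (fun _ => 0)}) = 0 := by
          intro i
          refine le_antisymm ?_ (by positivity)
          refine le_trans (Measure.le_map_apply (measurable_pi_apply i).aemeasurable _) ?_
          rw [hmarg i, hfull0 i]
        refine le_antisymm ?_ (by positivity)
        refine le_trans (measure_mono hsub) ?_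
        refine le_trans (measure_iUnion_le _) ?_
        rw [tsum_congr hzero, tsum_zero]
      filter_upwards [hgood] with ω hω
      rw [fseq_chi A K E' hE'def hAdep hfullK (T - 1 - 0) (by omega) ω]
      apply chi_true
      intro i s hs
      exact hω i s (by omega)
    | succ m ih =>
      intro hm
      have ihh := ih (by omega)
      set n : ℕ := T - 1 - m with hn_def
      have hn1 : 1 ≤ n := by omega
      set t : ℕ := T - n with ht_def
      have ht1 : 1 ≤ t := by omega
      have htT : t < T := by omega
      have htn : t + 1 = T - (n - 1) := by omega
      have hFform : ∀ ω', fseq K E' (n - 1) ω' = chi (GoodLt A (t + 1) ω') := by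
        intro ω'
        rw [fseq_chi A K E' hE'def hAdep hfullK (n - 1) (by omega) ω', htn]
      have hFmeas : Measurable (fseq K E' (n - 1)) := fseq_measurable K E' hE'meas (n - 1)
      -- a.e. the time-t conditions hold, coordinate by coordinate
      have hcoord : ∀ j : Fin N, ∀ᵐ ω ∂πm,
          GoodLt A t ω ∧ ev (ω j) t ∈ A t j ω := by
        intro j
        set Y : (Fin N → OTPath T) → ℝ≥0∞ :=
          stepL K t ((List.finRange N).erase j) (fseq K E' (n - 1)) with hY_def
        have hYmeas : Measurable Y := stepL_measurable K t _ _ hFmeas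
        have hYnodup : ((List.finRange N).erase j).Nodup :=
          (List.nodup_finRange N).erase j
        have hYform : ∀ ω, Y ω = chi (GoodLt A t ω ∧ ev (ω j) t ∈ A t j ω) := by
          intro ω
          rw [hY_def, stepL_chi A K hAdep hfullK ht1 htT _ hFform _ hYnodup ω]
          apply chi_congr
          constructor
          · rintro ⟨hg, hg'⟩
            refine ⟨hg, ?_⟩
            refine hg' j ?_
            intro hmem
            exact (List.Nodup.mem_erase_iff (List.nodup_finRange N)).mp hmem |>.1 rfl
          · rintro ⟨hg, hg'⟩
            refine ⟨hg, fun k hk => ?_⟩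
            have hkj : k = j := by
              by_contra hne
              exact hk ((List.Nodup.mem_erase_iff (List.nodup_finRange N)).mpr
                ⟨hne, List.mem_finRange k⟩)
            subst hkj
            exact hg'
        have hYinv : ∀ ω, Y (fun k => if k = j then trunc (ω j) (t + 1)
            else trunc (ω k) t) = Y ω := by
          intro ω
          rw [hYform, hYform]
          apply chi_congr
          set Θω : Fin N → OTPath T :=
            fun k => if k = j then trunc (ω j) (t + 1) else trunc (ω k) t with hΘω_def
          have hAeq : ∀ s : ℕ, s ≤ t → ∀ i, A s i Θω = A s i ω := by
            intro s hs i
            apply hAdep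
            intro k
            rw [hΘω_def]
            by_cases hk : k = j
            · simp only [hk, if_true]
              exact trunc_trunc (ω j) s (t + 1) (by omega)
            · simp only [hk, if_false]
              exact trunc_trunc (ω k) s t hs
          have hevlt : ∀ s : ℕ, s < t → ∀ i, ev (Θω i) s = ev (ω i) s := by
            intro s hs i
            rw [hΘω_def]
            by_cases hk : i = j
            · simp only [hk, if_true]
              exact ev_trunc (ω j) (t + 1) s (by omega)
            · simp only [hk, if_false]
              exact ev_trunc (ω i) t s hs
          have hevj : ev (Θω j) t = ev (ω j) t := by
            rw [hΘω_def]
            simp only [if_true]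
            exact ev_trunc (ω j) (t + 1) t (by omega)
          constructor
          · rintro ⟨hg, hg'⟩
            constructor
            · intro i s hs
              have := hg i s hs
              rwa [hevlt s hs i, hAeq s (by omega) i] at this
            · have := hg'
              rwa [hevj, hAeq t le_rfl j] at this
          · rintro ⟨hg, hg'⟩
            constructor
            · intro i s hs
              rw [hevlt s hs i, hAeq s (by omega) i]
              exact hg i s hs
            · rw [hevj, hAeq t le_rfl j]
              exact hg'
        have hid := core_identity P K hK πm hmarg hmc j ht1 htT Y hYmeas hYinv
        -- the inner integral is chi (GoodLt A t ω)
        have hinner : ∀ ω, (∫⁻ v, Y (upd ω j t v) ∂(K j t (ω j)))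
            = chi (GoodLt A t ω) := by
          intro ω
          have hcons : (∫⁻ v, Y (upd ω j t v) ∂(K j t (ω j)))
              = stepL K t (j :: (List.finRange N).erase j) (fseq K E' (n - 1)) ω := rfl
          rw [hcons, stepL_chi A K hAdep hfullK ht1 htT _ hFform _
            (List.nodup_cons.mpr ⟨fun hmem =>
              ((List.Nodup.mem_erase_iff (List.nodup_finRange N)).mp hmem).1 rfl,
              hYnodup⟩) ω]
          apply chi_congr
          constructor
          · rintro ⟨hg, _⟩; exact hg
          · intro hg
            refine ⟨hg, fun k hk => ?_⟩
            exfalso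
            apply hk
            by_cases hkj : k = j
            · rw [hkj]; exact List.mem_cons_self
            · exact List.mem_cons_of_mem j
                ((List.Nodup.mem_erase_iff (List.nodup_finRange N)).mpr
                  ⟨hkj, List.mem_finRange k⟩)
        -- ∫ Y = 1
        have hY1 : ∫⁻ ω, Y ω ∂πm = 1 := by
          rw [hid]
          have : ∀ᵐ ω ∂πm, (∫⁻ v, Y (upd ω j t v) ∂(K j t (ω j))) = 1 := by
            filter_upwards [ihh] with ω hω
            rw [hinner ω]
            rw [fseq_chi A K E' hE'def hAdep hfullK n (by omega) ω] at hω
            rwa [show T - n = t from rfl] at hω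
          rw [lintegral_congr_ae this, lintegral_one, measure_univ]
        have hYle : ∀ ω, Y ω ≤ 1 := fun ω => by rw [hYform]; exact chi_le_one _
        have hae1 := ae_eq_one_of_lintegral_eq_one πm hYmeas hYle hY1
        filter_upwards [hae1] with ω hω
        rw [hYform] at hω
        exact chi_eq_one_iff.mp hω
      -- combine over j
      have hall : ∀ᵐ ω ∂πm, ∀ j : Fin N, GoodLt A t ω ∧ ev (ω j) t ∈ A t j ω :=
        ae_all_iff.mpr hcoord
      filter_upwards [hall, ihh] with ω hω hω'
      have hTm : T - 1 - (m + 1) = n - 1 := by omega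
      rw [hTm, hFform ω]
      apply chi_true
      intro i s hs
      rcases Nat.lt_succ_iff_lt_or_eq.mp hs with h | h
      · -- s < t : use GoodLt from ihh
        rw [fseq_chi A K E' hE'def hAdep hfullK n (by omega) ω] at hω'
        have hg := chi_eq_one_iff.mp hω'
        exact hg i s (by omega)
      · subst h
        exact (hω i).2
  -- conclude
  have hfinal := main (T - 1) le_rfl
  have hzero : πm {ω : Fin N → OTPath T | ¬ (fseq K E' 0 ω = 1)} = 0 := by
    rw [← ae_iff]
    have hTT : T - 1 - (T - 1) = 0 := by omega
    rw [hTT] at hfinal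
    exact hfinal
  refine measure_mono_null ?_ hzero
  intro ω hω
  simp only [Set.mem_setOf_eq, fseq]
  rw [Set.indicator_of_notMem (by simpa using hω)]
  simp
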